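/- The direct limit of the system ℤ³ → ℤ³ → ⋯ with each map given by the matrix [[2,1,2],[2,3,0],[2,0,3]] is isomorphic to ℤ[1/5] ⊕ ℤ[1/3], with the two summands generated by the classes of the eigenvectors (1,1,1) (eigenvalue 5) and (0,2,−1) (eigenvalue 3). -/

import Mathlib

noncomputable section

/-- The subgroup `ℤ[1/p] ⊆ ℚ` of fractions with denominator a power of `p`. -/
def zOneDiv (p : ℕ) : AddSubgroup ℚ :=
  AddSubgroup.closure {q : ℚ | ∃ n : ℕ, q = 1 / (p : ℚ) ^ n}

/-- The matrix `[[2,1,2],[2,3,0],[2,0,3]]` as an endomorphism of `ℤ³`. -/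
def sigma : Module.End ℤ (Fin 3 → ℤ) := Matrix.toLin' !![2, 1, 2; 2, 3, 0; 2, 0, 3]

/-- The constant directed system `ℤ³ → ℤ³ → ⋯` with transition map `M`. -/
def fSys : ∀ i j : ℕ, i ≤ j → (Fin 3 → ℤ) →ₗ[ℤ] (Fin 3 → ℤ) :=
  fun i j _ => sigma ^ (j - i)

/-- The direct limit `lim→(ℤ³, M)`. -/
def L : Type := Module.DirectLimit (fun _ : ℕ => Fin 3 → ℤ) fSys

instance : AddCommGroup L := Module.DirectLimit.addCommGroup _ fSys

/-- The class in the direct limit of a vector at stage `k`. -/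
def ofL (k : ℕ) (v : Fin 3 → ℤ) : L :=
  Module.DirectLimit.of ℤ ℕ (fun _ : ℕ => Fin 3 → ℤ) fSys k v

/-- `1/5^k ∈ ℤ[1/5]`. -/
def fifthPow (k : ℕ) : ↥(zOneDiv 5) :=
  ⟨1 / (5 : ℚ) ^ k, AddSubgroup.subset_closure ⟨k, rfl⟩⟩

/-- `1/3^k ∈ ℤ[1/3]`. -/
def thirdPow (k : ℕ) : ↥(zOneDiv 3) :=
  ⟨1 / (3 : ℚ) ^ k, AddSubgroup.subset_closure ⟨k, rfl⟩⟩

-- auxiliary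

lemma sigma_apply (v : Fin 3 → ℤ) :
    sigma v = ![2*v 0 + v 1 + 2*v 2, 2*v 0 + 3*v 1, 2*v 0 + 3*v 2] := by
  simp [sigma, Matrix.toLin'_apply, Matrix.mulVec, dotProduct, Fin.sum_univ_three]

/-- The stage-`k` map to `ℚ × ℚ`. -/
def gk (k : ℕ) : (Fin 3 → ℤ) →ₗ[ℤ] ℚ × ℚ where
  toFun v := (((2*v 0 + v 1 + 2*v 2 : ℤ) : ℚ) / 5 ^ (k+1), ((v 1 - v 2 : ℤ) : ℚ) / 3 ^ (k+1))
  map_add' x y := by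
    simp only [Pi.add_apply, Prod.mk_add_mk, Prod.mk.injEq]
    constructor <;> push_cast <;> ring
  map_smul' c x := by
    simp only [Pi.smul_apply, smul_eq_mul, RingHom.id_apply, Prod.smul_mk, zsmul_eq_mul,
      Prod.mk.injEq]
    constructor <;> push_cast <;> ring

lemma gk_step (k : ℕ) (v : Fin 3 → ℤ) : gk (k+1) (sigma v) = gk k v := by
  rw [sigma_apply]
  simp only [gk, LinearMap.coe_mk, AddHom.coe_mk, Matrix.cons_val_zero, Matrix.cons_val_one,
    Matrix.head_cons, Matrix.cons_val_two, Matrix.tail_cons, Prod.mk.injEq]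
  constructor <;> push_cast <;> field_simp <;> ring

lemma gk_pow (n k : ℕ) (v : Fin 3 → ℤ) : gk (k + n) ((sigma ^ n) v) = gk k v := by
  induction n generalizing k v with
  | zero => simp
  | succ n ih =>
    have h1 : (sigma ^ (n+1)) v = (sigma ^ n) (sigma v) := by
      rw [pow_succ, Module.End.mul_apply]
    rw [h1, show k + (n+1) = (k+1) + n by omega, ih (k+1) (sigma v), gk_step]

lemma gk_compat (i j : ℕ) (hij : i ≤ j) (v : Fin 3 → ℤ) :
    gk j (fSys i j hij v) = gk i v := by
  have h := gk_pow (j - i) i v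
  rw [show i + (j - i) = j by omega] at h
  exact h

/-- The lifted map on the direct limit. -/
def GG : L →ₗ[ℤ] ℚ × ℚ :=
  Module.DirectLimit.lift ℤ ℕ (fun _ : ℕ => Fin 3 → ℤ) fSys gk
    (fun i j hij v => gk_compat i j hij v)

lemma GG_ofL (k : ℕ) (v : Fin 3 → ℤ) : GG (ofL k v) = gk k v :=
  Module.DirectLimit.lift_of _ _ _

lemma GG_e1 (k : ℕ) : GG (ofL k ![1,1,1]) = (1 / (5:ℚ) ^ k, 0) := by
  rw [GG_ofL]
  simp only [gk, LinearMap.coe_mk, AddHom.coe_mk, Matrix.cons_val_zero, Matrix.cons_val_one,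
    Matrix.head_cons, Matrix.cons_val_two, Matrix.tail_cons]
  norm_num
  rw [pow_succ]
  field_simp

lemma GG_e2 (k : ℕ) : GG (ofL k ![0,2,-1]) = (0, 1 / (3:ℚ) ^ k) := by
  rw [GG_ofL]
  simp only [gk, LinearMap.coe_mk, AddHom.coe_mk, Matrix.cons_val_zero, Matrix.cons_val_one,
    Matrix.head_cons, Matrix.cons_val_two, Matrix.tail_cons]
  norm_num
  rw [pow_succ]
  field_simp

lemma exists_rep (x : L) : ∃ k v, ofL k v = x :=
  Module.DirectLimit.exists_of x

lemma GG_mem (x : L) : (GG x).1 ∈ zOneDiv 5 ∧ (GG x).2 ∈ zOneDiv 3 := by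
  obtain ⟨k, v, rfl⟩ := exists_rep x
  rw [GG_ofL]
  constructor
  · have h : (gk k v).1 = (2*v 0 + v 1 + 2*v 2) • ((1 : ℚ) / 5 ^ (k+1)) := by
      simp [gk, zsmul_eq_mul]; ring
    rw [h]
    exact AddSubgroup.zsmul_mem _ (AddSubgroup.subset_closure
      (show (1:ℚ)/5^(k+1) ∈ {q : ℚ | ∃ n : ℕ, q = 1 / (5:ℚ) ^ n} from ⟨k+1, rfl⟩)) _
  · have h : (gk k v).2 = (v 1 - v 2) • ((1 : ℚ) / 3 ^ (k+1)) := by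
      simp [gk, zsmul_eq_mul]; ring
    rw [h]
    exact AddSubgroup.zsmul_mem _ (AddSubgroup.subset_closure
      (show (1:ℚ)/3^(k+1) ∈ {q : ℚ | ∃ n : ℕ, q = 1 / (3:ℚ) ^ n} from ⟨k+1, rfl⟩)) _

lemma GG_inj : Function.Injective GG := by
  rw [injective_iff_map_eq_zero]
  intro x hx
  obtain ⟨k, v, rfl⟩ := exists_rep x
  rw [GG_ofL] at hx
  have h1 : ((2*v 0 + v 1 + 2*v 2 : ℤ) : ℚ) / 5 ^ (k+1) = 0 := congrArg Prod.fst hx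
  have h2 : ((v 1 - v 2 : ℤ) : ℚ) / 3 ^ (k+1) = 0 := congrArg Prod.snd hx
  have e1 : 2*v 0 + v 1 + 2*v 2 = 0 := by
    field_simp at h1; exact_mod_cast h1
  have e2 : v 1 = v 2 := by
    field_simp at h2; exact_mod_cast sub_eq_zero.mp (by exact_mod_cast h2)
  have hs : sigma v = 0 := by
    rw [sigma_apply]
    ext i
    fin_cases i <;> simp <;> omega
  have : ofL k v = ofL (k+1) (sigma v) := by
    have := Module.DirectLimit.of_f (R := ℤ) (ι := ℕ) (G := fun _ : ℕ => Fin 3 → ℤ)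
      (f := fSys) (i := k) (j := k+1) (hij := Nat.le_succ k) (x := v)
    rw [ofL, ofL, ← this]
    congr 1
    show (sigma ^ (k+1-k)) v = sigma v
    norm_num
  rw [this, hs, ofL]
  exact map_zero _

/-- The map into the product of subgroups. -/
def GG' : L →+ ↥(zOneDiv 5) × ↥(zOneDiv 3) where
  toFun x := (⟨(GG x).1, (GG_mem x).1⟩, ⟨(GG x).2, (GG_mem x).2⟩)
  map_zero' := by simp
  map_add' x y := by
    ext <;> simp

lemma GG'_surj : Function.Surjective GG' := by
  have hr5 : ∀ a : ℚ, a ∈ zOneDiv 5 → ∃ x : L, GG x = (a, 0) := by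
    intro a ha
    induction ha using AddSubgroup.closure_induction with
    | mem q hq => obtain ⟨n, rfl⟩ := hq; exact ⟨ofL n ![1,1,1], GG_e1 n⟩
    | zero => exact ⟨0, by simp [Prod.ext_iff]⟩
    | add a b _ _ iha ihb =>
      obtain ⟨x, hx⟩ := iha; obtain ⟨y, hy⟩ := ihb
      exact ⟨x + y, by rw [map_add, hx, hy]; simp [Prod.ext_iff]⟩
    | neg a _ iha =>
      obtain ⟨x, hx⟩ := iha
      exact ⟨-x, by rw [map_neg, hx]; simp [Prod.ext_iff]⟩
  have hr3 : ∀ b : ℚ, b ∈ zOneDiv 3 → ∃ x : L, GG x = (0, b) := by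
    intro b hb
    induction hb using AddSubgroup.closure_induction with
    | mem q hq => obtain ⟨n, rfl⟩ := hq; exact ⟨ofL n ![0,2,-1], GG_e2 n⟩
    | zero => exact ⟨0, by simp [Prod.ext_iff]⟩
    | add a b _ _ iha ihb =>
      obtain ⟨x, hx⟩ := iha; obtain ⟨y, hy⟩ := ihb
      exact ⟨x + y, by rw [map_add, hx, hy]; simp [Prod.ext_iff]⟩
    | neg a _ iha =>
      obtain ⟨x, hx⟩ := iha
      exact ⟨-x, by rw [map_neg, hx]; simp [Prod.ext_iff]⟩
  rintro ⟨⟨a, ha⟩, ⟨b, hb⟩⟩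
  obtain ⟨x, hx⟩ := hr5 a ha
  obtain ⟨y, hy⟩ := hr3 b hb
  refine ⟨x + y, ?_⟩
  have : GG (x + y) = (a, b) := by rw [map_add, hx, hy]; simp [Prod.ext_iff]
  simp only [GG', AddMonoidHom.coe_mk, ZeroHom.coe_mk]
  ext <;> simp [this]

/-- The direct limit of `ℤ³ → ℤ³ → ⋯` along `[[2,1,2],[2,3,0],[2,0,3]]` is isomorphic to
`ℤ[1/5] ⊕ ℤ[1/3]`, with the summands generated by the classes of the eigenvectors
`(1,1,1)` (eigenvalue 5) and `(0,2,−1)` (eigenvalue 3). -/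
theorem stmt6 :
    ∃ e : L ≃+ ↥(zOneDiv 5) × ↥(zOneDiv 3),
      ∀ k : ℕ,
        e (ofL k ![1, 1, 1]) = (fifthPow k, 0) ∧
        e (ofL k ![0, 2, -1]) = (0, thirdPow k) := by
  have hinj : Function.Injective GG' := by
    intro x y h
    apply GG_inj
    have h1 := congrArg (fun p => ((p.1 : ℚ), (p.2 : ℚ))) h
    simp only [GG', AddMonoidHom.coe_mk, ZeroHom.coe_mk] at h1
    exact Prod.ext (congrArg Prod.fst h1) (congrArg Prod.snd h1)
  refine ⟨AddEquiv.ofBijective GG' ⟨hinj, GG'_surj⟩, fun k => ⟨?_, ?_⟩⟩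
  · have := GG_e1 k
    simp only [AddEquiv.ofBijective_apply, GG', AddMonoidHom.coe_mk, ZeroHom.coe_mk]
    ext <;> simp [this, fifthPow]
  · have := GG_e2 k
    simp only [AddEquiv.ofBijective_apply, GG', AddMonoidHom.coe_mk, ZeroHom.coe_mk]
    ext <;> simp [this, thirdPow]
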